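/- Let π* and π be probability distributions on a finite set A, and let ε = min_a π*_a > 0. Then ‖π* − π‖₁ ≥ 2ε√(1 − exp(−D_KL(π* ∥ π)/ε)). -/

import Mathlib

open Finset Real

private lemma chord_log (x t : ℝ) (hx : 0 < x) (ht0 : 0 ≤ t) (ht1 : t ≤ 1) :
    t * Real.log x ≤ Real.log (t * x + (1 - t)) := by
  have h := strictConcaveOn_log_Ioi.concaveOn.2
    (Set.mem_Ioi.mpr hx) (Set.mem_Ioi.mpr one_pos) ht0
    (sub_nonneg.mpr ht1 : (0:ℝ) ≤ 1 - t) (by ring)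
  simp only [smul_eq_mul, Real.log_one, mul_zero, add_zero, mul_one] at h
  exact h

private lemma term_bound (p q ε s : ℝ) (hp : 0 < p) (hq : 0 < q) (hεp : ε ≤ p)
    (hε : 0 < ε) (hs0 : 0 < s) (hs1 : s < 1) (hd : |q - p| ≤ ε * s) :
    p * Real.log (p / q) ≤
      (-(Real.log (1 + s)) / s) * max (q - p) 0 + (-(Real.log (1 - s)) / s) * max (p - q) 0 := by
  have hlog : Real.log (p / q) = -Real.log (q / p) := by
    rw [← Real.log_inv, inv_div]
  rcases le_total p q with hpq | hpq
  · -- q ≥ p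
    set t := (q - p) / (p * s) with hts
    have hden : 0 < p * s := mul_pos hp hs0
    have ht0 : 0 ≤ t := div_nonneg (by linarith) hden.le
    have ht1 : t ≤ 1 := by
      rw [div_le_one hden]
      have : q - p ≤ ε * s := by
        rw [abs_of_nonneg (by linarith)] at hd; exact hd
      nlinarith
    have hc := chord_log (1 + s) t (by linarith) ht0 ht1
    have heq : t * (1 + s) + (1 - t) = q / p := by
      field_simp [hts]
      have := div_mul_cancel₀ (q - p) hden.ne'; rw [← hts] at this; linear_combination this
    rw [heq] at hc
    rw [hlog]
    rw [max_eq_left (by linarith), max_eq_right (by linarith)]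
    have h2 : p * (t * Real.log (1 + s)) ≤ p * Real.log (q / p) :=
      mul_le_mul_of_nonneg_left hc hp.le
    have h3 : p * t = (q - p) / s := by
      rw [hts]; field_simp
    have h4 : p * (t * Real.log (1 + s)) = (Real.log (1 + s) / s) * (q - p) := by
      rw [show p * (t * Real.log (1 + s)) = (p * t) * Real.log (1 + s) by ring, h3]; ring
    calc p * -Real.log (q / p) ≤ -(p * (t * Real.log (1 + s))) := by linarith
      _ = -(Real.log (1 + s)) / s * (q - p) + -(Real.log (1 - s)) / s * 0 := by
          rw [h4]; ring
  · -- q ≤ p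
    set t := (p - q) / (p * s) with hts
    have hden : 0 < p * s := mul_pos hp hs0
    have ht0 : 0 ≤ t := div_nonneg (by linarith) hden.le
    have ht1 : t ≤ 1 := by
      rw [div_le_one hden]
      have : p - q ≤ ε * s := by
        rw [abs_of_nonpos (by linarith)] at hd; linarith
      nlinarith
    have hc := chord_log (1 - s) t (by linarith) ht0 ht1
    have heq : t * (1 - s) + (1 - t) = q / p := by
      field_simp [hts]
      have := div_mul_cancel₀ (p - q) hden.ne'; rw [← hts] at this; linear_combination -this
    rw [heq] at hc
    rw [hlog]
    rw [max_eq_right (by linarith), max_eq_left (by linarith)]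
    have h2 : p * (t * Real.log (1 - s)) ≤ p * Real.log (q / p) :=
      mul_le_mul_of_nonneg_left hc hp.le
    have h3 : p * t = (p - q) / s := by
      rw [hts]; field_simp
    have h4 : p * (t * Real.log (1 - s)) = (Real.log (1 - s) / s) * (p - q) := by
      rw [show p * (t * Real.log (1 - s)) = (p * t) * Real.log (1 - s) by ring, h3]; ring
    calc p * -Real.log (q / p) ≤ -(p * (t * Real.log (1 - s))) := by linarith
      _ = -(Real.log (1 + s)) / s * 0 + -(Real.log (1 - s)) / s * (p - q) := by
          rw [h4]; ring

theorem stmt_17 {A : Type*} [Fintype A] [Nonempty A]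
    (piStar pi : A → ℝ)
    (hstar : (∀ a, 0 ≤ piStar a) ∧ ∑ a, piStar a = 1)
    (hpi : (∀ a, 0 ≤ pi a) ∧ ∑ a, pi a = 1)
    (ε : ℝ) (hε : ε = Finset.univ.inf' Finset.univ_nonempty piStar)
    (hεpos : 0 < ε) :
    ((∀ a, 0 < pi a) →
      2 * ε * Real.sqrt (1 - Real.exp
        (-(∑ a, piStar a * Real.log (piStar a / pi a)) / ε)) ≤
        ∑ a, |piStar a - pi a|) ∧
    ((∃ a, pi a = 0) → 2 * ε ≤ ∑ a, |piStar a - pi a|) := by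
  classical
  obtain ⟨hsnn, hssum⟩ := hstar
  obtain ⟨hpnn, hpsum⟩ := hpi
  have hεle : ∀ a, ε ≤ piStar a := fun a => hε ▸ Finset.inf'_le _ (Finset.mem_univ a)
  set δ := ∑ a, |piStar a - pi a| with hδdef
  have hsum0 : ∑ b, (pi b - piStar b) = 0 := by
    rw [Finset.sum_sub_distrib, hpsum, hssum]; ring
  have hδabs : δ = ∑ a, |pi a - piStar a| := by
    rw [hδdef]; exact Finset.sum_congr rfl fun a _ => abs_sub_comm _ _
  have hδnn : 0 ≤ δ := Finset.sum_nonneg fun a _ => abs_nonneg _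
  have habs : ∀ a, |pi a - piStar a| ≤ δ / 2 := by
    intro a
    have e0 : ∑ b ∈ Finset.univ.erase a, (pi b - piStar b) + (pi a - piStar a) = 0 := by
      rw [Finset.sum_erase_add Finset.univ _ (Finset.mem_univ a)]; exact hsum0
    have e2 : |pi a - piStar a| ≤ ∑ b ∈ Finset.univ.erase a, |pi b - piStar b| := by
      calc |pi a - piStar a| = |∑ b ∈ Finset.univ.erase a, (pi b - piStar b)| := by
            rw [show pi a - piStar a = -∑ b ∈ Finset.univ.erase a, (pi b - piStar b) by linarith]
            rw [abs_neg]
        _ ≤ _ := Finset.abs_sum_le_sum_abs _ _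
    have e3 : ∑ b ∈ Finset.univ.erase a, |pi b - piStar b| + |pi a - piStar a| = δ := by
      rw [hδabs]; exact Finset.sum_erase_add Finset.univ _ (Finset.mem_univ a)
    linarith
  constructor
  · intro hpos
    rcases le_or_gt (2 * ε) δ with hcase | hcase
    · have hep := Real.exp_pos ((-(∑ a, piStar a * Real.log (piStar a / pi a))) / ε)
      have h1 : Real.sqrt (1 - Real.exp
          (-(∑ a, piStar a * Real.log (piStar a / pi a)) / ε)) ≤ 1 :=
        Real.sqrt_le_one.mpr (by linarith)
      have h0 := Real.sqrt_nonneg (1 - Real.exp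
          (-(∑ a, piStar a * Real.log (piStar a / pi a)) / ε))
      nlinarith
    · rcases eq_or_lt_of_le hδnn with hδ0 | hδ0
      · -- δ = 0, so pi = piStar
        have hz : ∑ a, |piStar a - pi a| = 0 := by rw [← hδdef]; exact hδ0.symm
        have hzero : ∀ a, |piStar a - pi a| = 0 := by
          intro a
          have h := (Finset.sum_eq_zero_iff_of_nonneg
            (f := fun b => |piStar b - pi b|) (s := Finset.univ)
            (fun b _ => abs_nonneg _)).mp hz
          exact h a (Finset.mem_univ a)
        have heq : ∀ a, piStar a = pi a := fun a => by
          have := abs_eq_zero.mp (hzero a); linarith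
        have hD : (∑ a, piStar a * Real.log (piStar a / pi a)) = 0 := by
          apply Finset.sum_eq_zero
          intro a _
          rw [heq a, div_self (hpos a).ne', Real.log_one, mul_zero]
        rw [hD]
        simp only [neg_zero, zero_div, Real.exp_zero, sub_self, Real.sqrt_zero, mul_zero]
        linarith
      · -- main case : 0 < δ < 2ε
        set s := δ / (2 * ε) with hsdef
        have hs0 : 0 < s := div_pos hδ0 (by linarith)
        have hs1 : s < 1 := by
          rw [hsdef, div_lt_one (by linarith)]; exact hcase
        have hεs : ε * s = δ / 2 := by
          rw [hsdef]; field_simp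
        have hDle : (∑ a, piStar a * Real.log (piStar a / pi a)) ≤
            (-(Real.log (1 + s)) / s) * (δ / 2) + (-(Real.log (1 - s)) / s) * (δ / 2) := by
          have hstep : ∀ a ∈ Finset.univ, piStar a * Real.log (piStar a / pi a) ≤
              (-(Real.log (1 + s)) / s) * max (pi a - piStar a) 0 +
              (-(Real.log (1 - s)) / s) * max (piStar a - pi a) 0 := by
            intro a _
            exact term_bound (piStar a) (pi a) ε s (lt_of_lt_of_le hεpos (hεle a))
              (hpos a) (hεle a) hεpos hs0 hs1 (hεs ▸ habs a)
          calc (∑ a, piStar a * Real.log (piStar a / pi a))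
              ≤ ∑ a, ((-(Real.log (1 + s)) / s) * max (pi a - piStar a) 0 +
                (-(Real.log (1 - s)) / s) * max (piStar a - pi a) 0) :=
                Finset.sum_le_sum hstep
            _ = (-(Real.log (1 + s)) / s) * (∑ a, max (pi a - piStar a) 0) +
                (-(Real.log (1 - s)) / s) * (∑ a, max (piStar a - pi a) 0) := by
                rw [Finset.sum_add_distrib, Finset.mul_sum, Finset.mul_sum]
            _ = (-(Real.log (1 + s)) / s) * (δ / 2) + (-(Real.log (1 - s)) / s) * (δ / 2) := by
                have hmax : ∀ x : ℝ, max x 0 = (x + |x|) / 2 := by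
                  intro x; rcases le_total 0 x with h | h
                  · rw [max_eq_left h, abs_of_nonneg h]; ring
                  · rw [max_eq_right h, abs_of_nonpos h]; ring
                have m1 : (∑ a, max (pi a - piStar a) 0) = δ / 2 := by
                  simp only [hmax]
                  rw [← Finset.sum_div, Finset.sum_add_distrib, hsum0, ← hδabs]
                  ring
                have m2 : (∑ a, max (piStar a - pi a) 0) = δ / 2 := by
                  simp only [hmax]
                  rw [← Finset.sum_div, Finset.sum_add_distrib]
                  have : ∑ b, (piStar b - pi b) = 0 := by
                    rw [Finset.sum_sub_distrib, hpsum, hssum]; ring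
                  rw [this, ← hδdef]
                  ring
                rw [m1, m2]
        -- deduce exp bound
        have hδ2s : δ / 2 = ε * s := hεs.symm
        have hDle2 : (∑ a, piStar a * Real.log (piStar a / pi a)) ≤
            ε * (-(Real.log ((1 + s) * (1 - s)))) := by
          rw [Real.log_mul (by linarith) (by linarith)]
          calc _ ≤ (-(Real.log (1 + s)) / s) * (δ / 2) + (-(Real.log (1 - s)) / s) * (δ / 2) :=
                hDle
            _ = ε * (-(Real.log (1 + s) + Real.log (1 - s))) := by
                rw [hδ2s]; field_simp; ring
        have hexp : 1 - s ^ 2 ≤ Real.exp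
            (-(∑ a, piStar a * Real.log (piStar a / pi a)) / ε) := by
          have h1 : Real.log ((1 + s) * (1 - s)) ≤
              -(∑ a, piStar a * Real.log (piStar a / pi a)) / ε := by
            rw [le_div_iff₀ hεpos]
            nlinarith [hDle2]
          calc 1 - s ^ 2 = (1 + s) * (1 - s) := by ring
            _ = Real.exp (Real.log ((1 + s) * (1 - s))) := by
                rw [Real.exp_log (by nlinarith)]
            _ ≤ _ := Real.exp_le_exp.mpr h1
        have hsq : Real.sqrt (1 - Real.exp
            (-(∑ a, piStar a * Real.log (piStar a / pi a)) / ε)) ≤ s := by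
          calc _ ≤ Real.sqrt (s ^ 2) := Real.sqrt_le_sqrt (by linarith)
            _ = s := Real.sqrt_sq hs0.le
        calc 2 * ε * Real.sqrt (1 - Real.exp
              (-(∑ a, piStar a * Real.log (piStar a / pi a)) / ε))
            ≤ 2 * ε * s := by nlinarith
          _ = δ := by rw [hsdef]; field_simp
  · rintro ⟨a, ha⟩
    have e1 : |pi a - piStar a| = piStar a := by
      rw [ha]; rw [abs_of_nonpos (by linarith [hsnn a])]; ring
    have e2 : ε ≤ ∑ b ∈ Finset.univ.erase a, |pi b - piStar b| := by
      have e0 : ∑ b ∈ Finset.univ.erase a, (pi b - piStar b) + (pi a - piStar a) = 0 := by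
        rw [Finset.sum_erase_add Finset.univ _ (Finset.mem_univ a)]; exact hsum0
      calc ε ≤ piStar a := hεle a
        _ = |∑ b ∈ Finset.univ.erase a, (pi b - piStar b)| := by
            rw [show (∑ b ∈ Finset.univ.erase a, (pi b - piStar b)) = piStar a by
              rw [ha] at e0; linarith]
            rw [abs_of_nonneg (by linarith [hεle a])]
        _ ≤ _ := Finset.abs_sum_le_sum_abs _ _
    have e3 : ∑ b ∈ Finset.univ.erase a, |pi b - piStar b| + |pi a - piStar a| = δ := by
      rw [hδabs]; exact Finset.sum_erase_add Finset.univ _ (Finset.mem_univ a)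
    have h5 : ε ≤ piStar a := hεle a
    rw [e1] at e3
    linarith
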